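/- Let M ∈ ℝ and assume that 2M·I − (γ/h) ∑_{j=1}^J [L_j, L_jᴴ] is positive semidefinite. Then for every λ > 0 and every A ∈ M_d(ℂ): λ‖A‖ ≤ ‖ℒA − (M+λ)A‖ and λ‖A‖ ≤ ‖ℒ*A − (M+λ)A‖. -/

import Mathlib

open Matrix
open scoped BigOperators ComplexOrder

/-- The Lindbladian `ℒA = (i/h)[P,A] + (γ/h) ∑ⱼ (LⱼALⱼᴴ − ½(LⱼᴴLⱼA + ALⱼᴴLⱼ))`. -/
noncomputable def Lindbladian {d J : ℕ} (h γ : ℝ) (P : Matrix (Fin d) (Fin d) ℂ)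
    (L : Fin J → Matrix (Fin d) (Fin d) ℂ) (A : Matrix (Fin d) (Fin d) ℂ) :
    Matrix (Fin d) (Fin d) ℂ :=
  (Complex.I / (h : ℂ)) • (P * A - A * P)
    + ((γ / h : ℝ) : ℂ) • ∑ j, (L j * A * (L j)ᴴ
        - (1 / 2 : ℂ) • ((L j)ᴴ * L j * A + A * ((L j)ᴴ * L j)))

/-- The adjoint Lindbladian
`ℒ*B = −(i/h)[P,B] + (γ/h) ∑ⱼ (LⱼᴴBLⱼ − ½(LⱼᴴLⱼB + BLⱼᴴLⱼ))`. -/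
noncomputable def LindbladianAdj {d J : ℕ} (h γ : ℝ) (P : Matrix (Fin d) (Fin d) ℂ)
    (L : Fin J → Matrix (Fin d) (Fin d) ℂ) (B : Matrix (Fin d) (Fin d) ℂ) :
    Matrix (Fin d) (Fin d) ℂ :=
  -(Complex.I / (h : ℂ)) • (P * B - B * P)
    + ((γ / h : ℝ) : ℂ) • ∑ j, ((L j)ᴴ * B * L j
        - (1 / 2 : ℂ) • ((L j)ᴴ * L j * B + B * ((L j)ᴴ * L j)))


/-- The Hilbert–Schmidt norm `‖A‖ = (tr(AAᴴ))^{1/2}`. -/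
noncomputable def hsNorm {d : ℕ} (A : Matrix (Fin d) (Fin d) ℂ) : ℝ :=
  Real.sqrt (((A * Aᴴ).trace).re)

/-! ### Auxiliary Hilbert–Schmidt toolkit -/

/-- The matrix viewed as a vector in Euclidean space. -/
noncomputable def vecM {d : ℕ} (X : Matrix (Fin d) (Fin d) ℂ) :
    EuclideanSpace ℂ (Fin d × Fin d) := WithLp.toLp 2 (fun p : Fin d × Fin d => X p.1 p.2)

lemma inner_vecM {d : ℕ} (X Y : Matrix (Fin d) (Fin d) ℂ) :
    (inner ℂ (vecM X) (vecM Y) : ℂ) = (Y * Xᴴ).trace := by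
  simp [vecM, EuclideanSpace.inner_toLp_toLp, dotProduct, Matrix.trace, Matrix.diag, Matrix.mul_apply, conjTranspose_apply,
    ← Finset.univ_product_univ, Finset.sum_product, mul_comm]

lemma norm_vecM {d : ℕ} (X : Matrix (Fin d) (Fin d) ℂ) : ‖vecM X‖ = hsNorm X := by
  rw [@norm_eq_sqrt_re_inner ℂ, inner_vecM, hsNorm, RCLike.re_to_complex]

lemma hsNorm_nonneg {d : ℕ} (X : Matrix (Fin d) (Fin d) ℂ) : 0 ≤ hsNorm X :=
  Real.sqrt_nonneg _

lemma hsNorm_sq {d : ℕ} (X : Matrix (Fin d) (Fin d) ℂ) :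
    hsNorm X ^ 2 = ((X * Xᴴ).trace).re := by
  rw [← norm_vecM, @norm_sq_eq_re_inner ℂ, inner_vecM, RCLike.re_to_complex]

lemma cs_trace {d : ℕ} (X Y : Matrix (Fin d) (Fin d) ℂ) :
    ((Y * Xᴴ).trace).re ≤ hsNorm Y * hsNorm X := by
  rw [← inner_vecM]
  calc (inner ℂ (vecM X) (vecM Y) : ℂ).re ≤ ‖(inner ℂ (vecM X) (vecM Y) : ℂ)‖ :=
        Complex.re_le_norm _
    _ ≤ ‖vecM X‖ * ‖vecM Y‖ := norm_inner_le_norm _ _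
    _ = hsNorm Y * hsNorm X := by rw [norm_vecM, norm_vecM, mul_comm]

lemma psd_trace_re_nonneg {d : ℕ} {X : Matrix (Fin d) (Fin d) ℂ} (hX : X.PosSemidef) :
    0 ≤ (X.trace).re := by
  rw [Matrix.trace]
  simp only [Complex.re_sum]
  apply Finset.sum_nonneg
  intro i _
  have := hX.dotProduct_mulVec_nonneg (Pi.single i 1)
  rw [Complex.le_def] at this
  refine le_of_le_of_eq this.1 ?_
  simp [dotProduct, Matrix.mulVec, Pi.single_apply, Matrix.diag]

/-- Cauchy–Schwarz + AM–GM bound for the cross term. -/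
lemma cross_term_bound {d : ℕ} (K A : Matrix (Fin d) (Fin d) ℂ) :
    ((K * A * Kᴴ * Aᴴ).trace).re
      ≤ ((Kᴴ * K * A * Aᴴ).trace).re / 2 + ((A * (K * Kᴴ) * Aᴴ).trace).re / 2 := by
  have e1 : K * A * Kᴴ * Aᴴ = (K * A) * (A * K)ᴴ := by
    simp [conjTranspose_mul, Matrix.mul_assoc]
  have h1 : ((K * A * Kᴴ * Aᴴ).trace).re ≤ hsNorm (K * A) * hsNorm (A * K) := by
    rw [e1]; exact cs_trace (A * K) (K * A)
  have h2 : hsNorm (K * A) * hsNorm (A * K)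
      ≤ hsNorm (K * A) ^ 2 / 2 + hsNorm (A * K) ^ 2 / 2 := by
    nlinarith [sq_nonneg (hsNorm (K * A) - hsNorm (A * K))]
  have e2 : hsNorm (K * A) ^ 2 = ((Kᴴ * K * A * Aᴴ).trace).re := by
    rw [hsNorm_sq]
    congr 1
    calc ((K * A) * (K * A)ᴴ).trace = ((K * (A * Aᴴ)) * Kᴴ).trace := by
          simp [conjTranspose_mul, Matrix.mul_assoc]
      _ = (Kᴴ * (K * (A * Aᴴ))).trace := Matrix.trace_mul_comm _ _
      _ = (Kᴴ * K * A * Aᴴ).trace := by simp [Matrix.mul_assoc]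
  have e3 : hsNorm (A * K) ^ 2 = ((A * (K * Kᴴ) * Aᴴ).trace).re := by
    rw [hsNorm_sq]
    congr 1
    simp [conjTranspose_mul, Matrix.mul_assoc]
  linarith

lemma herm_trace_im_zero {d : ℕ} (P A : Matrix (Fin d) (Fin d) ℂ) (hP : P.IsHermitian) :
    ((P * A * Aᴴ).trace - (A * P * Aᴴ).trace).im = 0 := by
  have h1 : star ((P * A * Aᴴ).trace) = (P * A * Aᴴ).trace := by
    rw [← Matrix.trace_conjTranspose]
    simp only [conjTranspose_mul, conjTranspose_conjTranspose, hP.eq]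
    rw [← Matrix.mul_assoc, Matrix.trace_mul_cycle]
  have h2 : star ((A * P * Aᴴ).trace) = (A * P * Aᴴ).trace := by
    rw [← Matrix.trace_conjTranspose]
    simp only [conjTranspose_mul, conjTranspose_conjTranspose, hP.eq]
    rw [← Matrix.mul_assoc, Matrix.trace_mul_cycle]
  rw [Complex.sub_im, Complex.conj_eq_iff_im.mp h1, Complex.conj_eq_iff_im.mp h2, sub_zero]

/-- The PSD hypothesis, sandwiched as `A * X * Aᴴ`. -/
lemma psd_sandwich_bound {d J : ℕ} (c : ℝ) (twoM : ℝ)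
    (L : Fin J → Matrix (Fin d) (Fin d) ℂ)
    (hM : (((twoM : ℝ) : ℂ) • (1 : Matrix (Fin d) (Fin d) ℂ)
        - ((c : ℝ) : ℂ) • ∑ j, (L j * (L j)ᴴ - (L j)ᴴ * L j)).PosSemidef)
    (A : Matrix (Fin d) (Fin d) ℂ) :
    ((A * (((c : ℝ) : ℂ) • ∑ j, (L j * (L j)ᴴ - (L j)ᴴ * L j)) * Aᴴ).trace).re
      ≤ twoM * ((A * Aᴴ).trace).re := by
  have hpsd := hM.mul_mul_conjTranspose_same A
  have h0 := psd_trace_re_nonneg hpsd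
  have e : A * (((twoM : ℝ) : ℂ) • (1 : Matrix (Fin d) (Fin d) ℂ)
        - ((c : ℝ) : ℂ) • ∑ j, (L j * (L j)ᴴ - (L j)ᴴ * L j)) * Aᴴ
      = ((twoM : ℝ) : ℂ) • (A * Aᴴ)
        - A * (((c : ℝ) : ℂ) • ∑ j, (L j * (L j)ᴴ - (L j)ᴴ * L j)) * Aᴴ := by
    simp [Matrix.mul_sub, Matrix.sub_mul, Matrix.mul_smul, Matrix.smul_mul]
  rw [e, trace_sub, trace_smul, Complex.sub_re, smul_eq_mul, Complex.re_ofReal_mul] at h0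
  linarith

lemma psd_sandwich_bound' {d J : ℕ} (c : ℝ) (twoM : ℝ)
    (L : Fin J → Matrix (Fin d) (Fin d) ℂ)
    (hM : (((twoM : ℝ) : ℂ) • (1 : Matrix (Fin d) (Fin d) ℂ)
        - ((c : ℝ) : ℂ) • ∑ j, (L j * (L j)ᴴ - (L j)ᴴ * L j)).PosSemidef)
    (A : Matrix (Fin d) (Fin d) ℂ) :
    ((Aᴴ * (((c : ℝ) : ℂ) • ∑ j, (L j * (L j)ᴴ - (L j)ᴴ * L j)) * A).trace).re
      ≤ twoM * ((A * Aᴴ).trace).re := by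
  have hpsd := hM.conjTranspose_mul_mul_same A
  have h0 := psd_trace_re_nonneg hpsd
  have e : Aᴴ * (((twoM : ℝ) : ℂ) • (1 : Matrix (Fin d) (Fin d) ℂ)
        - ((c : ℝ) : ℂ) • ∑ j, (L j * (L j)ᴴ - (L j)ᴴ * L j)) * A
      = ((twoM : ℝ) : ℂ) • (Aᴴ * A)
        - Aᴴ * (((c : ℝ) : ℂ) • ∑ j, (L j * (L j)ᴴ - (L j)ᴴ * L j)) * A := by
    simp [Matrix.mul_sub, Matrix.sub_mul, Matrix.mul_smul, Matrix.smul_mul]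
  rw [e, trace_sub, trace_smul, Complex.sub_re, smul_eq_mul, Complex.re_ofReal_mul,
    Matrix.trace_mul_comm] at h0
  linarith

/-- Dissipativity of the Lindbladian: `Re⟨ℒA, A⟩ ≤ M‖A‖²`. -/
lemma lind_dissipative {d J : ℕ} (h γ : ℝ) (hh : 0 < h) (hγ : 0 ≤ γ)
    (P : Matrix (Fin d) (Fin d) ℂ) (hP : P.IsHermitian)
    (L : Fin J → Matrix (Fin d) (Fin d) ℂ) (M : ℝ)
    (hM : (((2 * M : ℝ) : ℂ) • (1 : Matrix (Fin d) (Fin d) ℂ)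
        - ((γ / h : ℝ) : ℂ) • ∑ j, (L j * (L j)ᴴ - (L j)ᴴ * L j)).PosSemidef)
    (A : Matrix (Fin d) (Fin d) ℂ) :
    ((Lindbladian h γ P L A * Aᴴ).trace).re ≤ M * ((A * Aᴴ).trace).re := by
  have expand : (Lindbladian h γ P L A * Aᴴ).trace =
      (Complex.I / (h : ℂ)) * ((P * A * Aᴴ).trace - (A * P * Aᴴ).trace)
      + ((γ / h : ℝ) : ℂ) * ∑ j, ((L j * A * (L j)ᴴ * Aᴴ).trace
          - (1 / 2 : ℂ) * (((L j)ᴴ * L j * A * Aᴴ).trace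
              + (A * ((L j)ᴴ * L j) * Aᴴ).trace)) := by
    simp only [Lindbladian, Matrix.add_mul, Matrix.sub_mul, Matrix.smul_mul, Finset.sum_mul,
      trace_add, trace_smul, trace_sub, trace_sum, smul_eq_mul]
  rw [expand, Complex.add_re]
  have ham : (Complex.I / (h : ℂ)
      * ((P * A * Aᴴ).trace - (A * P * Aᴴ).trace)).re = 0 := by
    rw [Complex.mul_re, herm_trace_im_zero P A hP]
    simp
  rw [ham, zero_add, Complex.re_ofReal_mul, Complex.re_sum]
  set c : ℝ := γ / h with hc
  have hc0 : 0 ≤ c := div_nonneg hγ hh.le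
  have bound : ∀ j, ((L j * A * (L j)ᴴ * Aᴴ).trace
          - (1 / 2 : ℂ) * (((L j)ᴴ * L j * A * Aᴴ).trace
              + (A * ((L j)ᴴ * L j) * Aᴴ).trace)).re
      ≤ (1 / 2) * ((A * (L j * (L j)ᴴ - (L j)ᴴ * L j) * Aᴴ).trace).re := by
    intro j
    have key := cross_term_bound (L j) A
    have e4 : A * (L j * (L j)ᴴ - (L j)ᴴ * L j) * Aᴴ
        = A * (L j * (L j)ᴴ) * Aᴴ - A * ((L j)ᴴ * L j) * Aᴴ := by
      simp [Matrix.mul_sub, Matrix.sub_mul]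
    rw [e4, trace_sub, Complex.sub_re]
    have : ((1 / 2 : ℂ) * (((L j)ᴴ * L j * A * Aᴴ).trace
        + (A * ((L j)ᴴ * L j) * Aᴴ).trace)).re
        = (((L j)ᴴ * L j * A * Aᴴ).trace.re + (A * ((L j)ᴴ * L j) * Aᴴ).trace.re) / 2 := by
      rw [show (1 / 2 : ℂ) = ((1 / 2 : ℝ) : ℂ) by norm_num, Complex.re_ofReal_mul,
        Complex.add_re]
      ring
    rw [Complex.sub_re, this]
    linarith
  have sum_bound : ∑ j, ((L j * A * (L j)ᴴ * Aᴴ).trace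
          - (1 / 2 : ℂ) * (((L j)ᴴ * L j * A * Aᴴ).trace
              + (A * ((L j)ᴴ * L j) * Aᴴ).trace)).re
      ≤ ∑ j, (1 / 2) * ((A * (L j * (L j)ᴴ - (L j)ᴴ * L j) * Aᴴ).trace).re :=
    Finset.sum_le_sum fun j _ => bound j
  have eq2 : c * ∑ j, (1 / 2) * ((A * (L j * (L j)ᴴ - (L j)ᴴ * L j) * Aᴴ).trace).re
      = (1 / 2) * ((A * (((c : ℝ) : ℂ) • ∑ j, (L j * (L j)ᴴ - (L j)ᴴ * L j)) * Aᴴ).trace).re := by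
    have e5 : A * (((c : ℝ) : ℂ) • ∑ j, (L j * (L j)ᴴ - (L j)ᴴ * L j)) * Aᴴ
        = ((c : ℝ) : ℂ) • ∑ j, A * (L j * (L j)ᴴ - (L j)ᴴ * L j) * Aᴴ := by
      rw [Matrix.mul_smul, Matrix.smul_mul, Finset.mul_sum, Finset.sum_mul]
    rw [e5, trace_smul, smul_eq_mul, Complex.re_ofReal_mul, trace_sum, Complex.re_sum,
      Finset.mul_sum, Finset.mul_sum, Finset.mul_sum]
    exact Finset.sum_congr rfl fun j _ => by ring
  have final := psd_sandwich_bound c (2 * M) L hM A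
  calc c * ∑ j, ((L j * A * (L j)ᴴ * Aᴴ).trace
          - (1 / 2 : ℂ) * (((L j)ᴴ * L j * A * Aᴴ).trace
              + (A * ((L j)ᴴ * L j) * Aᴴ).trace)).re
      ≤ c * ∑ j, (1 / 2) * ((A * (L j * (L j)ᴴ - (L j)ᴴ * L j) * Aᴴ).trace).re :=
        mul_le_mul_of_nonneg_left sum_bound hc0
    _ = (1 / 2) * ((A * (((c : ℝ) : ℂ) • ∑ j, (L j * (L j)ᴴ - (L j)ᴴ * L j)) * Aᴴ).trace).re :=
        eq2
    _ ≤ (1 / 2) * (2 * M * ((A * Aᴴ).trace).re) := by linarith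
    _ = M * ((A * Aᴴ).trace).re := by ring

/-- Dissipativity of the adjoint Lindbladian. -/
lemma lindAdj_dissipative {d J : ℕ} (h γ : ℝ) (hh : 0 < h) (hγ : 0 ≤ γ)
    (P : Matrix (Fin d) (Fin d) ℂ) (hP : P.IsHermitian)
    (L : Fin J → Matrix (Fin d) (Fin d) ℂ) (M : ℝ)
    (hM : (((2 * M : ℝ) : ℂ) • (1 : Matrix (Fin d) (Fin d) ℂ)
        - ((γ / h : ℝ) : ℂ) • ∑ j, (L j * (L j)ᴴ - (L j)ᴴ * L j)).PosSemidef)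
    (A : Matrix (Fin d) (Fin d) ℂ) :
    ((LindbladianAdj h γ P L A * Aᴴ).trace).re ≤ M * ((A * Aᴴ).trace).re := by
  have expand : (LindbladianAdj h γ P L A * Aᴴ).trace =
      -(Complex.I / (h : ℂ)) * ((P * A * Aᴴ).trace - (A * P * Aᴴ).trace)
      + ((γ / h : ℝ) : ℂ) * ∑ j, (((L j)ᴴ * A * L j * Aᴴ).trace
          - (1 / 2 : ℂ) * (((L j)ᴴ * L j * A * Aᴴ).trace
              + (A * ((L j)ᴴ * L j) * Aᴴ).trace)) := by
    simp only [LindbladianAdj, Matrix.add_mul, Matrix.sub_mul, Matrix.smul_mul, Finset.sum_mul,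
      trace_add, trace_smul, trace_sub, trace_sum, smul_eq_mul]
  rw [expand, Complex.add_re]
  have ham : (-(Complex.I / (h : ℂ))
      * ((P * A * Aᴴ).trace - (A * P * Aᴴ).trace)).re = 0 := by
    rw [Complex.mul_re, herm_trace_im_zero P A hP]
    simp
  rw [ham, zero_add, Complex.re_ofReal_mul, Complex.re_sum]
  set c : ℝ := γ / h with hc
  have hc0 : 0 ≤ c := div_nonneg hγ hh.le
  have bound : ∀ j, (((L j)ᴴ * A * L j * Aᴴ).trace
          - (1 / 2 : ℂ) * (((L j)ᴴ * L j * A * Aᴴ).trace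
              + (A * ((L j)ᴴ * L j) * Aᴴ).trace)).re
      ≤ (1 / 2) * ((Aᴴ * (L j * (L j)ᴴ - (L j)ᴴ * L j) * A).trace).re := by
    intro j
    have key := cross_term_bound (L j)ᴴ A
    rw [conjTranspose_conjTranspose] at key
    -- key : re tr(Lᴴ A L Aᴴ) ≤ re tr(L Lᴴ A Aᴴ)/2 + re tr(A (Lᴴ L) Aᴴ)/2
    have e4 : Aᴴ * (L j * (L j)ᴴ - (L j)ᴴ * L j) * A
        = Aᴴ * (L j * (L j)ᴴ) * A - Aᴴ * ((L j)ᴴ * L j) * A := by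
      simp [Matrix.mul_sub, Matrix.sub_mul]
    rw [e4, trace_sub, Complex.sub_re]
    have c1 : ((L j * (L j)ᴴ * A * Aᴴ).trace) = ((Aᴴ * (L j * (L j)ᴴ) * A).trace) := by
      rw [Matrix.trace_mul_cycle]
    have c2 : (((L j)ᴴ * L j * A * Aᴴ).trace) = ((Aᴴ * ((L j)ᴴ * L j) * A).trace) := by
      rw [Matrix.trace_mul_cycle]
    have : ((1 / 2 : ℂ) * (((L j)ᴴ * L j * A * Aᴴ).trace
        + (A * ((L j)ᴴ * L j) * Aᴴ).trace)).re
        = (((L j)ᴴ * L j * A * Aᴴ).trace.re + (A * ((L j)ᴴ * L j) * Aᴴ).trace.re) / 2 := by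
      rw [show (1 / 2 : ℂ) = ((1 / 2 : ℝ) : ℂ) by norm_num, Complex.re_ofReal_mul,
        Complex.add_re]
      ring
    rw [Complex.sub_re, this]
    rw [← c1, ← c2]
    linarith
  have sum_bound : ∑ j, (((L j)ᴴ * A * L j * Aᴴ).trace
          - (1 / 2 : ℂ) * (((L j)ᴴ * L j * A * Aᴴ).trace
              + (A * ((L j)ᴴ * L j) * Aᴴ).trace)).re
      ≤ ∑ j, (1 / 2) * ((Aᴴ * (L j * (L j)ᴴ - (L j)ᴴ * L j) * A).trace).re :=
    Finset.sum_le_sum fun j _ => bound j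
  have eq2 : c * ∑ j, (1 / 2) * ((Aᴴ * (L j * (L j)ᴴ - (L j)ᴴ * L j) * A).trace).re
      = (1 / 2) * ((Aᴴ * (((c : ℝ) : ℂ) • ∑ j, (L j * (L j)ᴴ - (L j)ᴴ * L j)) * A).trace).re := by
    have e5 : Aᴴ * (((c : ℝ) : ℂ) • ∑ j, (L j * (L j)ᴴ - (L j)ᴴ * L j)) * A
        = ((c : ℝ) : ℂ) • ∑ j, Aᴴ * (L j * (L j)ᴴ - (L j)ᴴ * L j) * A := by
      rw [Matrix.mul_smul, Matrix.smul_mul, Finset.mul_sum, Finset.sum_mul]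
    rw [e5, trace_smul, smul_eq_mul, Complex.re_ofReal_mul, trace_sum, Complex.re_sum,
      Finset.mul_sum, Finset.mul_sum, Finset.mul_sum]
    exact Finset.sum_congr rfl fun j _ => by ring
  have final := psd_sandwich_bound' c (2 * M) L hM A
  calc c * ∑ j, (((L j)ᴴ * A * L j * Aᴴ).trace
          - (1 / 2 : ℂ) * (((L j)ᴴ * L j * A * Aᴴ).trace
              + (A * ((L j)ᴴ * L j) * Aᴴ).trace)).re
      ≤ c * ∑ j, (1 / 2) * ((Aᴴ * (L j * (L j)ᴴ - (L j)ᴴ * L j) * A).trace).re :=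
        mul_le_mul_of_nonneg_left sum_bound hc0
    _ = (1 / 2) * ((Aᴴ * (((c : ℝ) : ℂ) • ∑ j, (L j * (L j)ᴴ - (L j)ᴴ * L j)) * A).trace).re :=
        eq2
    _ ≤ (1 / 2) * (2 * M * ((A * Aᴴ).trace).re) := by linarith
    _ = M * ((A * Aᴴ).trace).re := by ring

/-- Abstract resolvent estimate from dissipativity. -/
lemma resolvent_from_dissipative {d : ℕ} (M lam : ℝ) (hlam : 0 < lam)
    (T A : Matrix (Fin d) (Fin d) ℂ)
    (hT : ((T * Aᴴ).trace).re ≤ M * ((A * Aᴴ).trace).re) :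
    lam * hsNorm A ≤ hsNorm (T - (((M + lam : ℝ) : ℂ)) • A) := by
  set D := T - (((M + lam : ℝ) : ℂ)) • A with hD
  have e : (-D) * Aᴴ = (((M + lam : ℝ) : ℂ)) • (A * Aᴴ) - T * Aᴴ := by
    rw [hD]
    simp [Matrix.sub_mul, Matrix.smul_mul]
  have key : lam * hsNorm A ^ 2 ≤ (((-D) * Aᴴ).trace).re := by
    rw [e, trace_sub, trace_smul, Complex.sub_re, smul_eq_mul, Complex.re_ofReal_mul,
      hsNorm_sq]
    nlinarith
  have cs := cs_trace A (-D)
  have hneg : hsNorm (-D) = hsNorm D := by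
    unfold hsNorm
    congr 2
    rw [conjTranspose_neg, Matrix.neg_mul, Matrix.mul_neg, neg_neg]
  rw [hneg] at cs
  rcases eq_or_lt_of_le (hsNorm_nonneg A) with h0 | h0
  · rw [← h0, mul_zero]
    exact hsNorm_nonneg D
  · have : lam * hsNorm A ^ 2 ≤ hsNorm D * hsNorm A := le_trans key cs
    rw [pow_two, ← mul_assoc] at this
    exact le_of_mul_le_mul_right this h0

/-- Lemma 4.5 (finite-dimensional instance): if
`(γ/h) ∑ⱼ [Lⱼ,Lⱼᴴ] ≤ 2M`, then for all `λ > 0`,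
`λ‖A‖ ≤ ‖(ℒ − M − λ)A‖` and `λ‖A‖ ≤ ‖(ℒ* − M − λ)A‖`. -/
theorem lindbladian_resolvent_estimate (d J : ℕ) (hd : 1 ≤ d) (hJ : 1 ≤ J) (h γ : ℝ)
    (hh : 0 < h) (hγ : 0 ≤ γ) (P : Matrix (Fin d) (Fin d) ℂ) (hP : P.IsHermitian)
    (L : Fin J → Matrix (Fin d) (Fin d) ℂ) (M : ℝ)
    (hM : (((2 * M : ℝ) : ℂ) • (1 : Matrix (Fin d) (Fin d) ℂ)
        - ((γ / h : ℝ) : ℂ) • ∑ j, (L j * (L j)ᴴ - (L j)ᴴ * L j)).PosSemidef)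
    (lam : ℝ) (hlam : 0 < lam) (A : Matrix (Fin d) (Fin d) ℂ) :
    lam * hsNorm A ≤ hsNorm (Lindbladian h γ P L A - (((M + lam : ℝ) : ℂ)) • A)
      ∧ lam * hsNorm A ≤ hsNorm (LindbladianAdj h γ P L A - (((M + lam : ℝ) : ℂ)) • A) := by
  constructor
  · exact resolvent_from_dissipative M lam hlam _ A
      (lind_dissipative h γ hh hγ P hP L M hM A)
  · exact resolvent_from_dissipative M lam hlam _ A
      (lindAdj_dissipative h γ hh hγ P hP L M hM A)
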